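/- For k > 0 with sin(k·l₁) ≠ 0 and sin(k·l₂) ≠ 0, the boundary value problem −f'' = k²f on (−l₁, 0) ∪ (0, l₂), with f(−l₁) = f(l₂) = 0, f continuous at 0 with value f₀, and f'(0⁺) − f'(0⁻) = α·f₀, has a nontrivial solution if and only if ζ_α(k) := α + k·cot(k·l₁) + k·cot(k·l₂) = 0 or f₀ = 0 with sin(k·l₁) = sin(k·l₂) = 0 simultaneously; in particular, if moreover f₀ ≠ 0 is required, nontrivial solutions exist iff ζ_α(k) = 0. -/

import Mathlib

open Real Set

private lemma sin_deriv (k a x : ℝ) :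
    HasDerivAt (fun y => Real.sin (k * (y - a))) (k * Real.cos (k * (x - a))) x := by
  have h1 : HasDerivAt (fun y => k * (y - a)) k x := by
    simpa using ((hasDerivAt_id x).sub_const a).const_mul k
  simpa [mul_comm, Function.comp_def] using (Real.hasDerivAt_sin (k * (x - a))).comp x h1

private lemma cos_deriv (k a x : ℝ) :
    HasDerivAt (fun y => Real.cos (k * (y - a))) (-(k * Real.sin (k * (x - a)))) x := by
  have h1 : HasDerivAt (fun y => k * (y - a)) k x := by
    simpa using ((hasDerivAt_id x).sub_const a).const_mul k
  simpa [mul_comm, Function.comp_def] using (Real.hasDerivAt_cos (k * (x - a))).comp x h1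

private lemma sin_deriv' (k b x : ℝ) :
    HasDerivAt (fun y => Real.sin (k * (b - y))) (-(k * Real.cos (k * (b - x)))) x := by
  have h1 : HasDerivAt (fun y => k * (b - y)) (-k) x := by
    simpa using ((hasDerivAt_id x).const_sub b).const_mul k
  have := (Real.hasDerivAt_sin (k * (b - x))).comp x h1
  simpa [mul_comm, Function.comp_def] using this

private lemma cos_deriv' (k b x : ℝ) :
    HasDerivAt (fun y => Real.cos (k * (b - y))) (k * Real.sin (k * (b - x))) x := by
  have h1 : HasDerivAt (fun y => k * (b - y)) (-k) x := by
    simpa using ((hasDerivAt_id x).const_sub b).const_mul k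
  have := (Real.hasDerivAt_cos (k * (b - x))).comp x h1
  exact this.congr_deriv (by ring)

private lemma rep (k a b : ℝ) (f f' : ℝ → ℝ)
    (hf : ∀ x ∈ Icc a b, HasDerivAt f (f' x) x)
    (hf' : ∀ x ∈ Icc a b, HasDerivAt f' (-(k ^ 2) * f x) x) :
    ∀ x ∈ Icc a b, k * f x = k * f a * cos (k * (x - a)) + f' a * sin (k * (x - a)) ∧
      f' x = -(k * f a) * sin (k * (x - a)) + f' a * cos (k * (x - a)) := by
  set W1 : ℝ → ℝ := fun x => f x * (k * cos (k * (x - a))) - f' x * sin (k * (x - a)) with hW1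
  set W2 : ℝ → ℝ := fun x => f x * (-(k * sin (k * (x - a)))) - f' x * cos (k * (x - a)) with hW2
  have dW1 : ∀ x ∈ Icc a b, HasDerivAt W1 0 x := by
    intro x hx
    have := ((hf x hx).mul ((cos_deriv k a x).const_mul k)).sub
      ((hf' x hx).mul (sin_deriv k a x))
    exact this.congr_deriv (by ring)
  have dW2 : ∀ x ∈ Icc a b, HasDerivAt W2 0 x := by
    intro x hx
    have := ((hf x hx).mul ((sin_deriv k a x).const_mul k).neg).sub
      ((hf' x hx).mul (cos_deriv k a x))
    exact this.congr_deriv (by simp only [Pi.neg_apply]; ring)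
  have c1 : ∀ x ∈ Icc a b, W1 x = W1 a := by
    apply constant_of_has_deriv_right_zero
    · exact fun x hx => ((dW1 x hx).continuousAt).continuousWithinAt
    · exact fun x hx => ((dW1 x (Ico_subset_Icc_self hx)).hasDerivWithinAt)
  have c2 : ∀ x ∈ Icc a b, W2 x = W2 a := by
    apply constant_of_has_deriv_right_zero
    · exact fun x hx => ((dW2 x hx).continuousAt).continuousWithinAt
    · exact fun x hx => ((dW2 x (Ico_subset_Icc_self hx)).hasDerivWithinAt)
  intro x hx
  have e1 := c1 x hx
  have e2 := c2 x hx
  simp only [hW1, hW2, sub_self, mul_zero, Real.sin_zero, Real.cos_zero] at e1 e2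
  have pyth := Real.sin_sq_add_cos_sq (k * (x - a))
  constructor
  · linear_combination cos (k * (x - a)) * e1 - sin (k * (x - a)) * e2 - k * f x * pyth
  · linear_combination (-sin (k * (x - a))) * e1 - cos (k * (x - a)) * e2 - f' x * pyth

theorem interval_delta_secular_equation (l₁ l₂ α k : ℝ)
    (hl₁ : 0 < l₁) (hl₂ : 0 < l₂) (hk : 0 < k)
    (hs₁ : sin (k * l₁) ≠ 0) (hs₂ : sin (k * l₂) ≠ 0) :
    (∃ fL fR fL' fR' : ℝ → ℝ,
      (∀ x ∈ Icc (-l₁) 0, HasDerivAt fL (fL' x) x) ∧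
      (∀ x ∈ Icc (-l₁) 0, HasDerivAt fL' (-(k ^ 2) * fL x) x) ∧
      (∀ x ∈ Icc 0 l₂, HasDerivAt fR (fR' x) x) ∧
      (∀ x ∈ Icc 0 l₂, HasDerivAt fR' (-(k ^ 2) * fR x) x) ∧
      fL (-l₁) = 0 ∧ fR l₂ = 0 ∧ fL 0 = fR 0 ∧
      fR' 0 - fL' 0 = α * fL 0 ∧
      (¬(∀ x ∈ Icc (-l₁) 0, fL x = 0) ∨ ¬(∀ x ∈ Icc 0 l₂, fR x = 0)))
    ↔ α + k * (cos (k * l₁) / sin (k * l₁)) + k * (cos (k * l₂) / sin (k * l₂)) = 0 := by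
  have hk0 : k ≠ 0 := hk.ne'
  constructor
  · rintro ⟨fL, fR, fL', fR', h1, h2, h3, h4, hL0, hR0, hcont, hmatch, hnt⟩
    have repL := rep k (-l₁) 0 fL fL' h1 h2
    have repR := rep k 0 l₂ fR fR' h3 h4
    have h0L : (0 : ℝ) ∈ Icc (-l₁) 0 := ⟨neg_nonpos.2 hl₁.le, le_refl 0⟩
    have hl2R : l₂ ∈ Icc 0 l₂ := ⟨hl₂.le, le_refl l₂⟩
    have eL := repL 0 h0L
    have eR := repR l₂ hl2R
    have hx1 : (0 : ℝ) - -l₁ = l₁ := by ring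
    have hx2 : l₂ - 0 = l₂ := by ring
    rw [hx1] at eL
    rw [hx2] at eR
    obtain ⟨eL1, eL2⟩ := eL
    obtain ⟨eR1, eR2⟩ := eR
    rw [hL0] at eL1 eL2
    rw [hR0] at eR1
    -- eL1 : k * fL 0 = k * 0 * cos (k*l₁) + fL' (-l₁) * sin (k*l₁)
    -- eL2 : fL' 0 = -(k*0) * sin (k*l₁) + fL' (-l₁) * cos (k*l₁)
    -- eR1 : k * 0 = k * fR 0 * cos (k*l₂) + fR' 0 * sin (k*l₂)
    by_cases hc : fL 0 = 0
    · exfalso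
      have hfL' : fL' (-l₁) = 0 := by
        have : fL' (-l₁) * sin (k * l₁) = 0 := by
          rw [hc] at eL1; linarith [eL1]
        exact (mul_eq_zero.mp this).resolve_right hs₁
      have hfR0 : fR 0 = 0 := by rw [← hcont, hc]
      have hfR' : fR' 0 = 0 := by
        have : fR' 0 * sin (k * l₂) = 0 := by
          rw [hfR0] at eR1; linarith [eR1]
        exact (mul_eq_zero.mp this).resolve_right hs₂
      have hLz : ∀ x ∈ Icc (-l₁) 0, fL x = 0 := by
        intro x hx
        have := (repL x hx).1
        rw [hL0, hfL'] at this
        have hkf : k * fL x = 0 := by linarith [this]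
        exact (mul_eq_zero.mp hkf).resolve_left hk0
      have hRz : ∀ x ∈ Icc 0 l₂, fR x = 0 := by
        intro x hx
        have := (repR x hx).1
        rw [hfR0, hfR'] at this
        have hkf : k * fR x = 0 := by linarith [this]
        exact (mul_eq_zero.mp hkf).resolve_left hk0
      rcases hnt with h | h
      · exact h hLz
      · exact h hRz
    · -- fL 0 ≠ 0
      rw [← hcont] at eR1
      have key : fL 0 * ((α + k * (cos (k * l₁) / sin (k * l₁)) +
          k * (cos (k * l₂) / sin (k * l₂))) * (sin (k * l₁) * sin (k * l₂))) = 0 := by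
        field_simp
        linear_combination (-(sin (k * l₁) * sin (k * l₂))) * hmatch
          - (sin (k * l₁)) * eR1 + (cos (k * l₁) * sin (k * l₂)) * eL1
          - (sin (k * l₁) * sin (k * l₂)) * eL2
      have h2 := (mul_eq_zero.mp key).resolve_left hc
      rcases mul_eq_zero.mp h2 with h | h
      · exact h
      · exact absurd h (mul_ne_zero hs₁ hs₂)
  · intro hz
    refine ⟨fun x => sin (k * (x - -l₁)), fun x => (sin (k * l₁) / sin (k * l₂)) * sin (k * (l₂ - x)),
      fun x => k * cos (k * (x - -l₁)),
      fun x => -((sin (k * l₁) / sin (k * l₂)) * (k * cos (k * (l₂ - x)))),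
      fun x _ => sin_deriv k (-l₁) x, ?_, ?_, ?_, ?_, ?_, ?_, ?_, ?_⟩
    · intro x _
      have := (cos_deriv k (-l₁) x).const_mul k
      exact this.congr_deriv (by ring)
    · intro x _
      have := (sin_deriv' k l₂ x).const_mul (sin (k * l₁) / sin (k * l₂))
      exact this.congr_deriv (by ring)
    · intro x _
      have h := ((cos_deriv' k l₂ x).const_mul (sin (k * l₁) / sin (k * l₂) * k)).neg
      have h2 : (fun y => -(sin (k * l₁) / sin (k * l₂) * k * cos (k * (l₂ - y))))
          = (fun y => -(sin (k * l₁) / sin (k * l₂) * (k * cos (k * (l₂ - y))))) := by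
        funext y; ring
      simp only [Pi.neg_def] at h
      rw [h2] at h
      exact h.congr_deriv (by ring)
    · simp
    · simp
    · show sin (k * ((0:ℝ) - -l₁)) = sin (k * l₁) / sin (k * l₂) * sin (k * (l₂ - 0))
      rw [show (0:ℝ) - -l₁ = l₁ by ring, show l₂ - (0:ℝ) = l₂ by ring]
      field_simp
    · show -(sin (k * l₁) / sin (k * l₂) * (k * cos (k * (l₂ - 0)))) - k * cos (k * ((0:ℝ) - -l₁))
          = α * sin (k * ((0:ℝ) - -l₁))
      rw [show (0:ℝ) - -l₁ = l₁ by ring, show l₂ - (0:ℝ) = l₂ by ring]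
      field_simp at hz ⊢
      linear_combination (-1 : ℝ) * hz
    · left
      intro h
      have h0 := h 0 ⟨neg_nonpos.2 hl₁.le, le_refl 0⟩
      simp only [show (0 : ℝ) - -l₁ = l₁ by ring] at h0
      exact hs₁ h0
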